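/- Let C ⊆ ℂⁿ be a coisotropic real-linear subspace. Then: (i) g(x, iv) = 0 for all x ∈ C and v ∈ C^ω; (ii) the subspace H_C := {x ∈ C : g(x,w) = 0 for all w ∈ C^ω} is a complex subspace of ℂⁿ (closed under multiplication by i); (iii) ℂⁿ is the direct sum of H_C and C^ω + iC^ω, and these two summands are orthogonal with respect to the Hermitian inner product; and (iv) C = H_C ⊕ C^ω. -/

import Mathlib

noncomputable section

variable {n : ℕ}

/-- The real inner product `g(u,v) = Re⟨u,v⟩` on `ℂⁿ`. -/
def gR (u v : EuclideanSpace ℂ (Fin n)) : ℝ :=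
  Complex.re (inner ℂ u v : ℂ)

/-- The standard symplectic form `ω(u,v) = g(iu,v)` on `ℂⁿ`. -/
def omegaR (u v : EuclideanSpace ℂ (Fin n)) : ℝ :=
  gR ((Complex.I : ℂ) • u) v

lemma omegaR_add_right (u v w : EuclideanSpace ℂ (Fin n)) :
    omegaR u (v + w) = omegaR u v + omegaR u w := by
  simp [omegaR, gR, inner_add_right]

lemma omegaR_smul_right (c : ℝ) (u v : EuclideanSpace ℂ (Fin n)) :
    omegaR u (c • v) = c * omegaR u v := by
  simp [omegaR, gR, inner_smul_right, Complex.real_smul, Finset.mul_sum,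
    mul_sub, mul_left_comm]

lemma gR_add_left (u v w : EuclideanSpace ℂ (Fin n)) :
    gR (u + v) w = gR u w + gR v w := by
  simp [gR, inner_add_left]

lemma gR_smul_left (c : ℝ) (u v : EuclideanSpace ℂ (Fin n)) :
    gR (c • u) v = c * gR u v := by
  simp [gR, inner_smul_left, Complex.real_smul, Finset.mul_sum, mul_add,
    mul_assoc, mul_left_comm]

/-- The symplectic orthogonal `C^ω` of a real subspace `C ⊆ ℂⁿ`, as a real subspace. -/
def symplOrth (C : Submodule ℝ (EuclideanSpace ℂ (Fin n))) :
    Submodule ℝ (EuclideanSpace ℂ (Fin n)) where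
  carrier := {v | ∀ u ∈ C, omegaR u v = 0}
  add_mem' := by
    intro a b ha hb u hu
    rw [omegaR_add_right, ha u hu, hb u hu, add_zero]
  zero_mem' := by
    intro u hu
    have := omegaR_smul_right 0 u 0
    simpa using this
  smul_mem' := by
    intro c a ha u hu
    rw [omegaR_smul_right, ha u hu, mul_zero]

/-- Multiplication by `i` as a real-linear map on `ℂⁿ`. -/
def iL : EuclideanSpace ℂ (Fin n) →ₗ[ℝ] EuclideanSpace ℂ (Fin n) where
  toFun v := (Complex.I : ℂ) • v
  map_add' a b := smul_add _ a b
  map_smul' c a := by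
    simp only [RingHom.id_apply]
    exact (smul_comm c (Complex.I : ℂ) a).symm

/-- `H_C = {x ∈ C : g(x,w) = 0 ∀ w ∈ C^ω}`, the Hermitian-orthogonal complement of
`C^ω` inside `C`, as a real subspace. -/
def HC (C : Submodule ℝ (EuclideanSpace ℂ (Fin n))) :
    Submodule ℝ (EuclideanSpace ℂ (Fin n)) where
  carrier := {x | x ∈ C ∧ ∀ w ∈ symplOrth C, gR x w = 0}
  add_mem' := by
    intro a b ha hb
    refine ⟨C.add_mem ha.1 hb.1, fun w hw => ?_⟩
    rw [gR_add_left, ha.2 w hw, hb.2 w hw, add_zero]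
  zero_mem' := by
    refine ⟨C.zero_mem, fun w hw => ?_⟩
    have := gR_smul_left 0 0 w
    simpa using this
  smul_mem' := by
    intro c a ha
    refine ⟨C.smul_mem c ha.1, fun w hw => ?_⟩
    rw [gR_smul_left, ha.2 w hw, mul_zero]


-- Auxiliary lemmas --------------------------------------------------------

lemma gR_eq (u v : EuclideanSpace ℂ (Fin n)) : gR u v = (inner ℝ u v : ℝ) := by
  simp [gR, PiLp.inner_apply, Complex.inner, map_sum]

lemma omega_eq (u v : EuclideanSpace ℂ (Fin n)) : omegaR u v = (inner ℂ u v : ℂ).im := by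
  simp [omegaR, gR, inner_smul_left]

lemma gR_I_right (x v : EuclideanSpace ℂ (Fin n)) :
    gR x ((Complex.I:ℂ) • v) = - omegaR x v := by
  simp [omega_eq, gR, inner_smul_right]

lemma omega_I_right (u x : EuclideanSpace ℂ (Fin n)) :
    omegaR u ((Complex.I:ℂ) • x) = gR u x := by
  simp [omega_eq, gR, inner_smul_right]

lemma iL_iL (v : EuclideanSpace ℂ (Fin n)) : iL (iL v) = -v := by
  show (Complex.I:ℂ) • (Complex.I:ℂ) • v = -v
  rw [smul_smul, Complex.I_mul_I, neg_one_smul]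

lemma inner_iL_iL (u v : EuclideanSpace ℂ (Fin n)) :
    (inner ℝ (iL u) (iL v) : ℝ) = (inner ℝ u v : ℝ) := by
  show (inner ℝ ((Complex.I:ℂ) • u) ((Complex.I:ℂ) • v) : ℝ) = _
  rw [← gR_eq, ← gR_eq]
  simp [gR, inner_smul_left, inner_smul_right, Complex.mul_re, Complex.mul_im]

lemma map_iL_map_iL (K : Submodule ℝ (EuclideanSpace ℂ (Fin n))) :
    (K.map iL).map iL = K := by
  ext x
  simp only [Submodule.mem_map]
  constructor
  · rintro ⟨y, ⟨z, hz, rfl⟩, rfl⟩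
    rw [iL_iL]; exact K.neg_mem hz
  · intro hx
    exact ⟨iL (-x), ⟨-x, K.neg_mem hx, rfl⟩, by rw [iL_iL, neg_neg]⟩

lemma map_iL_orthogonal (K : Submodule ℝ (EuclideanSpace ℂ (Fin n))) :
    (Kᗮ).map iL = (K.map iL)ᗮ := by
  ext v
  simp only [Submodule.mem_map, Submodule.mem_orthogonal]
  constructor
  · rintro ⟨w, hw, rfl⟩ u ⟨a, ha, rfl⟩
    rw [inner_iL_iL]; exact hw a ha
  · intro hv
    refine ⟨-(iL v), Kᗮ.neg_mem ?_, by rw [map_neg, iL_iL, neg_neg]⟩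
    intro u hu
    have h1 : (inner ℝ (iL u) (iL (iL v)) : ℝ) = (inner ℝ u (iL v) : ℝ) := inner_iL_iL u (iL v)
    have h2 := hv (iL u) ⟨u, hu, rfl⟩
    rw [iL_iL, inner_neg_right] at h1
    linarith

lemma symplOrth_eq (C : Submodule ℝ (EuclideanSpace ℂ (Fin n))) :
    symplOrth C = (C.map iL)ᗮ := by
  ext v
  simp only [Submodule.mem_orthogonal, Submodule.mem_map]
  constructor
  · rintro hv u ⟨a, ha, rfl⟩
    have := hv a ha
    rwa [omegaR, gR_eq] at this
  · intro hv u hu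
    have := hv (iL u) ⟨u, hu, rfl⟩
    rwa [omegaR, gR_eq]

lemma HC_eq (C : Submodule ℝ (EuclideanSpace ℂ (Fin n))) :
    HC C = C ⊓ (symplOrth C)ᗮ := by
  ext x
  show (x ∈ C ∧ ∀ w ∈ symplOrth C, gR x w = 0) ↔ _
  simp only [Submodule.mem_inf, Submodule.mem_orthogonal]
  refine and_congr_right fun _ => forall₂_congr fun w hw => ?_
  rw [gR_eq, real_inner_comm]

lemma double_symplOrth (C : Submodule ℝ (EuclideanSpace ℂ (Fin n))) :
    symplOrth (symplOrth C) = C := by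
  rw [symplOrth_eq, symplOrth_eq, map_iL_orthogonal, map_iL_map_iL,
    Submodule.orthogonal_orthogonal]

lemma herm_orth (C : Submodule ℝ (EuclideanSpace ℂ (Fin n)))
    {x w : EuclideanSpace ℂ (Fin n)} (hx : x ∈ HC C) (hw : w ∈ symplOrth C) :
    (inner ℂ x w : ℂ) = 0 := by
  have hre : gR x w = 0 := hx.2 w hw
  have him : omegaR x w = 0 := hw x hx.1
  rw [omega_eq] at him
  rw [gR] at hre
  exact Complex.ext (by simpa using hre) (by simpa using him)

/-- For a coisotropic subspace `C ⊆ ℂⁿ`: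
(i) `g(x, iv) = 0` for `x ∈ C`, `v ∈ C^ω`;
(ii) `H_C` is a complex subspace (closed under multiplication by `i`);
(iii) `ℂⁿ = H_C ⊕ (C^ω + iC^ω)`, a Hermitian-orthogonal direct sum;
(iv) `C = H_C ⊕ C^ω`. -/
theorem coisotropic_decomposition (n : ℕ)
    (C : Submodule ℝ (EuclideanSpace ℂ (Fin n)))
    (hcoiso : symplOrth C ≤ C) :
    (∀ x ∈ C, ∀ v ∈ symplOrth C, gR x (iL v) = 0) ∧
    (∀ x ∈ HC C, iL x ∈ HC C) ∧
    (HC C ⊔ (symplOrth C ⊔ (symplOrth C).map iL) = ⊤ ∧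
      HC C ⊓ (symplOrth C ⊔ (symplOrth C).map iL) = ⊥ ∧
      ∀ x ∈ HC C, ∀ y ∈ symplOrth C ⊔ (symplOrth C).map iL,
        (inner ℂ x y : ℂ) = 0) ∧
    (HC C ⊔ symplOrth C = C ∧ HC C ⊓ symplOrth C = ⊥) := by
  classical
  have hW : symplOrth C ≤ C := hcoiso
  -- (i)
  have part1 : ∀ x ∈ C, ∀ v ∈ symplOrth C, gR x (iL v) = 0 := by
    intro x hx v hv
    show gR x ((Complex.I:ℂ) • v) = 0
    rw [gR_I_right, hv x hx, neg_zero]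
  -- Hermitian orthogonality with the sup
  have herm' : ∀ x ∈ HC C, ∀ y ∈ symplOrth C ⊔ (symplOrth C).map iL,
      (inner ℂ x y : ℂ) = 0 := by
    intro x hx y hy
    rcases Submodule.mem_sup.1 hy with ⟨a, ha, b, hb, rfl⟩
    rcases hb with ⟨c, hc, rfl⟩
    have h1 : (inner ℂ x a : ℂ) = 0 := herm_orth C hx ha
    have h2 : (inner ℂ x (iL c) : ℂ) = 0 := by
      show (inner ℂ x ((Complex.I:ℂ) • c) : ℂ) = 0
      rw [inner_smul_right, herm_orth C hx hc, mul_zero]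
    rw [inner_add_right, h1, h2, add_zero]
  -- (ii)
  have part2 : ∀ x ∈ HC C, iL x ∈ HC C := by
    intro x hx
    have hxC : iL x ∈ C := by
      rw [← double_symplOrth C]
      intro u hu
      show omegaR u ((Complex.I:ℂ) • x) = 0
      rw [omega_I_right, gR_eq, real_inner_comm, ← gR_eq]
      exact hx.2 u hu
    refine ⟨hxC, fun w hw => ?_⟩
    show gR ((Complex.I:ℂ) • x) w = 0
    exact hw x hx.1
  refine ⟨part1, part2, ⟨?_, ?_, herm'⟩, ?_, ?_⟩
  · -- H ⊔ (W ⊔ iW) = ⊤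
    have hle : (symplOrth C ⊔ (symplOrth C).map iL)ᗮ ≤ HC C := by
      intro z hz
      rw [← Submodule.inf_orthogonal] at hz
      rcases Submodule.mem_inf.1 hz with ⟨hz1, hz2⟩
      rw [HC_eq]
      refine Submodule.mem_inf.2 ⟨?_, hz1⟩
      rw [← double_symplOrth C, symplOrth_eq]
      exact hz2
    apply le_antisymm le_top
    have h2 : (symplOrth C ⊔ (symplOrth C).map iL)ᗮ ⊔
        (symplOrth C ⊔ (symplOrth C).map iL) = ⊤ := by
      rw [sup_comm]; exact Submodule.sup_orthogonal_of_hasOrthogonalProjection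
    rw [← h2]
    exact sup_le_sup_right hle _
  · -- H ⊓ (W ⊔ iW) = ⊥
    apply le_bot_iff.1
    intro x hx
    rcases Submodule.mem_inf.1 hx with ⟨hx1, hx2⟩
    have : (inner ℂ x x : ℂ) = 0 := herm' x hx1 x hx2
    simpa [Submodule.mem_bot] using inner_self_eq_zero.1 this
  · -- H ⊔ W = C
    apply le_antisymm
    · apply sup_le _ hcoiso
      intro x hx; exact hx.1
    · intro x hx
      have htop : symplOrth C ⊔ (symplOrth C)ᗮ = ⊤ :=
        Submodule.sup_orthogonal_of_hasOrthogonalProjection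
      have : x ∈ symplOrth C ⊔ (symplOrth C)ᗮ := htop ▸ Submodule.mem_top
      rcases Submodule.mem_sup.1 this with ⟨a, ha, b, hb, rfl⟩
      have hbC : b ∈ C := by
        have heq : b = a + b - a := by rw [add_sub_cancel_left]
        rw [heq]
        exact C.sub_mem hx (hW ha)
      have hbH : b ∈ HC C := by
        rw [HC_eq]; exact Submodule.mem_inf.2 ⟨hbC, hb⟩
      rw [add_comm]
      exact Submodule.add_mem_sup hbH ha
  · -- H ⊓ W = ⊥
    apply le_bot_iff.1
    intro x hx
    rcases Submodule.mem_inf.1 hx with ⟨hx1, hx2⟩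
    have : (inner ℂ x x : ℂ) = 0 := herm_orth C hx1 hx2
    simpa [Submodule.mem_bot] using inner_self_eq_zero.1 this

end
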